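/- Let Rad be a root system in a finite-dimensional real inner product space V and let t be an involution of Rad. Then there exists a regular vector v ∈ V such that (α,v)·(t(α),v) > 0 for every root α with t(α) ≠ ±α; that is, every involution of Rad admits an S-chamber. -/

import Mathlib

open scoped RealInnerProductSpace

namespace PaperRS

variable {V : Type*} [NormedAddCommGroup V] [InnerProductSpace ℝ V]

/-- The reflection in a root `α`. -/
noncomputable def reflRoot (α x : V) : V := x - (2 * ⟪x, α⟫ / ⟪α, α⟫) • α

/-- `Rad` is a (reduced, crystallographic) root system in `V`. -/
structure IsRootSystem (Rad : Set V) : Prop where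
  finite : Rad.Finite
  nonzero : ∀ α ∈ Rad, α ≠ 0
  spanning : Submodule.span ℝ Rad = ⊤
  integral : ∀ α ∈ Rad, ∀ β ∈ Rad, ∃ n : ℤ, 2 * ⟪β, α⟫ / ⟪α, α⟫ = (n : ℝ)
  reflMem : ∀ α ∈ Rad, ∀ β ∈ Rad, reflRoot α β ∈ Rad
  reduced : ∀ α ∈ Rad, ∀ c : ℝ, c • α ∈ Rad → c = 1 ∨ c = -1

/-- Irreducibility: `Rad` is not the union of two nonempty mutually orthogonal subsets. -/
def IsIrreducible (Rad : Set V) : Prop :=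
  ¬ ∃ R₁ R₂ : Set V, R₁.Nonempty ∧ R₂.Nonempty ∧ Rad = R₁ ∪ R₂ ∧
      ∀ α ∈ R₁, ∀ β ∈ R₂, ⟪α, β⟫ = 0

/-- An involution of the root system `Rad`: an orthogonal linear automorphism `t` of `V`
with `t(Rad) = Rad` and `t ∘ t = id`. -/
structure IsInvolution (Rad : Set V) (t : V ≃ₗᵢ[ℝ] V) : Prop where
  maps : (⇑t) '' Rad = Rad
  invol : ∀ x : V, t (t x) = x

/-- Two roots are strongly orthogonal if neither their sum nor their difference is a root. -/
def StronglyOrthogonal (Rad : Set V) (α β : V) : Prop :=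
  α ≠ β ∧ α ≠ -β ∧ α + β ∉ Rad ∧ α - β ∉ Rad

/-- A vector is regular for `Rad` if it is orthogonal to no root. -/
def IsRegular (Rad : Set V) (v : V) : Prop := ∀ α ∈ Rad, ⟪α, v⟫ ≠ 0

/-- The positive roots determined by a regular vector `v`. -/
def posRoots (Rad : Set V) (v : V) : Set V := {α ∈ Rad | 0 < ⟪α, v⟫}

/-- The base of simple roots determined by a regular vector `v`: the positive roots which
are not sums of two positive roots. -/
def simpleBase (Rad : Set V) (v : V) : Set V :=
  {α ∈ posRoots Rad v | ¬ ∃ β ∈ posRoots Rad v, ∃ γ ∈ posRoots Rad v, α = β + γ}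

/-- A regular vector `v` is an S-chamber vector for an involution `t` if
`(α,v)·(t α,v) > 0` for every complex root `α` (i.e. every root with `t α ≠ ±α`). -/
def IsSChamber (Rad : Set V) (t : V ≃ₗᵢ[ℝ] V) (v : V) : Prop :=
  IsRegular Rad v ∧
    ∀ α ∈ Rad, t α ≠ α → t α ≠ -α → 0 < ⟪α, v⟫ * ⟪t α, v⟫

/-- `P ⊆ Rad` is parabolic if `P ∪ (-P) = Rad` and `P` is closed under root addition. -/
def IsParabolic (Rad P : Set V) : Prop :=
  P ⊆ Rad ∧ (∀ α ∈ Rad, α ∈ P ∨ -α ∈ P) ∧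
    ∀ α ∈ P, ∀ β ∈ P, α + β ∈ Rad → α + β ∈ P

/-- Composition `s_{β 0} ∘ s_{β 1} ∘ ⋯ ∘ s_{β (r-1)}` of the reflections in the roots
`β 0, …, β (r-1)`. -/
noncomputable def reflComp : (r : ℕ) → (Fin r → V) → V → V
  | 0, _ => id
  | r + 1, β => reflRoot (β 0) ∘ reflComp r (fun i => β i.succ)

/-- A vector avoiding the orthogonal hyperplanes of a finite set of nonzero vectors. -/
lemma exists_inner_ne_zero {S : Set V} (hS : S.Finite) :
    (∀ β ∈ S, β ≠ 0) → ∃ v : V, ∀ β ∈ S, ⟪β, v⟫ ≠ 0 := by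
  refine Set.Finite.induction_on (motive := fun S _ => (∀ β ∈ S, β ≠ 0) → ∃ v : V, ∀ β ∈ S, ⟪β, v⟫ ≠ 0) S hS (fun _ => ⟨0, by simp⟩) ?_
  intro a s ha hs IH h0
  obtain ⟨v, hv⟩ := IH (fun β hβ => h0 β (Set.mem_insert_of_mem _ hβ))
  have ha0 : a ≠ 0 := h0 a (Set.mem_insert _ _)
  have haa : ⟪a, a⟫ ≠ 0 := by
    simpa using (inner_self_ne_zero (𝕜 := ℝ)).2 ha0
  set B : Set ℝ := insert (-⟪a, v⟫ / ⟪a, a⟫) ((fun γ => -⟪γ, v⟫ / ⟪γ, a⟫) '' s) with hB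
  have hBfin : B.Finite := Set.Finite.insert _ (hs.image _)
  obtain ⟨c, hc⟩ := hBfin.infinite_compl.nonempty
  refine ⟨v + c • a, ?_⟩
  intro β hβ
  have hexp : ⟪β, v + c • a⟫ = ⟪β, v⟫ + c * ⟪β, a⟫ := by
    rw [inner_add_right, real_inner_smul_right]
  rw [hexp]
  rcases Set.mem_insert_iff.1 hβ with rfl | hβs
  · intro hzero
    apply hc
    have : c = -⟪β, v⟫ / ⟪β, β⟫ := by field_simp; linarith
    exact Set.mem_insert_iff.2 (Or.inl this)
  · intro hzero
    by_cases hba : ⟪β, a⟫ = 0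
    · exact hv β hβs (by simpa [hba] using hzero)
    · apply hc
      have : c = -⟪β, v⟫ / ⟪β, a⟫ := by field_simp; linarith
      exact Set.mem_insert_iff.2 (Or.inr ⟨β, hβs, this.symm⟩)

/-- every involution of a root system admits an S-chamber. -/
theorem stmt7 {V : Type*} [NormedAddCommGroup V] [InnerProductSpace ℝ V]
    [FiniteDimensional ℝ V] (Rad : Set V) (hRS : IsRootSystem Rad)
    (t : V ≃ₗᵢ[ℝ] V) (ht : IsInvolution Rad t) :
    ∃ v : V, IsSChamber Rad t v := by
  classical
  have htmem : ∀ α ∈ Rad, t α ∈ Rad := fun α hα => ht.maps ▸ Set.mem_image_of_mem t hα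
  have hadj : ∀ x y : V, ⟪x, t y⟫ = ⟪t x, y⟫ := by
    intro x y
    nth_rewrite 1 [← ht.invol x]
    exact t.inner_map_map (t x) y
  set S1 : Set V := (fun α => α + t α) '' {α ∈ Rad | α + t α ≠ 0} with hS1
  have hS1fin : S1.Finite := (hRS.finite.subset (Set.sep_subset _ _)).image _
  obtain ⟨v₁, hv₁⟩ := exists_inner_ne_zero hS1fin
    (by rintro β ⟨α, ⟨hα, hne⟩, rfl⟩; exact hne)
  set w := v₁ + t v₁ with hw
  have hkey : ∀ α : V, ⟪α, w⟫ = ⟪α + t α, v₁⟫ := by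
    intro α
    rw [hw, inner_add_right, inner_add_left, hadj]
  have htw : ∀ α : V, ⟪t α, w⟫ = ⟪α, w⟫ := by
    intro α
    rw [hkey (t α), ht.invol α, hkey α, add_comm]
  have hwne : ∀ α ∈ Rad, α + t α ≠ 0 → ⟪α, w⟫ ≠ 0 := by
    intro α hα hne
    rw [hkey]
    exact hv₁ _ ⟨α, ⟨hα, hne⟩, rfl⟩
  obtain ⟨u, hu⟩ := exists_inner_ne_zero hRS.finite hRS.nonzero
  set F := hRS.finite.toFinset with hF
  set g : V → ℝ := fun α => if ⟪α, w⟫ = 0 then 1 else |⟪α, w⟫| / (|⟪α, u⟫| + 1) with hg'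
  have hg : ∀ α, 0 < g α := by
    intro α
    by_cases h : ⟪α, w⟫ = 0
    · simp [hg', h]
    · simp only [hg', h, if_false]
      exact div_pos (abs_pos.2 h) (by positivity)
  set T := insert (1 : ℝ) (F.image g) with hT
  have hT1 : (1 : ℝ) ∈ T := Finset.mem_insert_self _ _
  set ε := T.min' ⟨1, hT1⟩ with hε
  have hεpos : 0 < ε := by
    rcases Finset.mem_insert.1 (T.min'_mem ⟨1, hT1⟩) with h | h
    · rw [hε] at *; rw [h]; exact one_pos
    · obtain ⟨α, _, hgα⟩ := Finset.mem_image.1 h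
      rw [hε] at *; rw [← hgα]; exact hg α
  have hεle : ∀ α ∈ Rad, ε ≤ g α := fun α hα =>
    T.min'_le _ (Finset.mem_insert_of_mem
      (Finset.mem_image_of_mem g (hRS.finite.mem_toFinset.2 hα)))
  have hbound : ∀ α ∈ Rad, ⟪α, w⟫ ≠ 0 → ε * |⟪α, u⟫| < |⟪α, w⟫| := by
    intro α hα hne
    have h1 : ε ≤ |⟪α, w⟫| / (|⟪α, u⟫| + 1) := by simpa [hg', hne] using hεle α hα
    have h2 : 0 < |⟪α, w⟫| := abs_pos.2 hne
    have h3 : 0 ≤ |⟪α, u⟫| := abs_nonneg _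
    calc ε * |⟪α, u⟫| ≤ (|⟪α, w⟫| / (|⟪α, u⟫| + 1)) * |⟪α, u⟫| :=
          mul_le_mul_of_nonneg_right h1 h3
      _ < |⟪α, w⟫| := by
          rw [div_mul_eq_mul_div, div_lt_iff₀ (by positivity)]
          nlinarith
  have hexp : ∀ α : V, ⟪α, w + ε • u⟫ = ⟪α, w⟫ + ε * ⟪α, u⟫ := fun α => by
    rw [inner_add_right, real_inner_smul_right]
  have hsign : ∀ α ∈ Rad, ⟪α, w⟫ ≠ 0 → 0 < ⟪α, w⟫ * ⟪α, w + ε • u⟫ := by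
    intro α hα hne
    rw [hexp]
    have hb := hbound α hα hne
    have habs : |ε * ⟪α, u⟫| < |⟪α, w⟫| := by
      rw [abs_mul, abs_of_pos hεpos]; exact hb
    obtain ⟨hl, hr⟩ := abs_lt.1 habs
    rcases lt_or_gt_of_ne hne with hneg | hpos
    · nlinarith [abs_of_neg hneg]
    · nlinarith [abs_of_pos hpos]
  refine ⟨w + ε • u, ?_, ?_⟩
  · intro α hα
    by_cases hz : ⟪α, w⟫ = 0
    · rw [hexp, hz, zero_add]
      exact mul_ne_zero (ne_of_gt hεpos) (hu α hα)
    · intro h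
      have := hsign α hα hz
      rw [h, mul_zero] at this
      exact lt_irrefl 0 this
  · intro α hα _ hne2
    have hsum : α + t α ≠ 0 := fun h => hne2 (eq_neg_of_add_eq_zero_right h)
    have hαw : ⟪α, w⟫ ≠ 0 := hwne α hα hsum
    have htαw : ⟪t α, w⟫ = ⟪α, w⟫ := htw α
    have h1 := hsign α hα hαw
    have h2 := hsign (t α) (htmem α hα) (by rw [htαw]; exact hαw)
    rw [htαw] at h2
    nlinarith [mul_pos h1 h2, mul_self_pos.2 hαw]

end PaperRS
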